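/- Every apex simple graph on 12 vertices with exactly 38 edges has a vertex v of degree 11 (adjacent to all other vertices) such that the graph G − v is a maximal planar graph on 11 vertices. -/

import Mathlib

open SimpleGraph

/-- `H` is a minor of `G`: there is an assignment of (some) vertices of `G` to
branch sets, one nonempty connected branch set for each vertex of `H`, such that
every edge of `H` is realized by an edge of `G` between the corresponding branch sets. -/
def IsMinor {V W : Type} (H : SimpleGraph W) (G : SimpleGraph V) : Prop :=
  ∃ f : V → Option W,
    (∀ w : W, ∃ v, f v = some w) ∧
    (∀ w : W, (G.induce {v | f v = some w}).Connected) ∧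
    (∀ w₁ w₂ : W, H.Adj w₁ w₂ →
      ∃ v₁ v₂, f v₁ = some w₁ ∧ f v₂ = some w₂ ∧ G.Adj v₁ v₂)

/-- Planarity via Wagner's theorem: no `K₅` minor and no `K₃,₃` minor. -/
def IsPlanar {V : Type} (G : SimpleGraph V) : Prop :=
  ¬ IsMinor (completeGraph (Fin 5)) G ∧
    ¬ IsMinor (completeBipartiteGraph (Fin 3) (Fin 3)) G

/-- A graph is apex if deleting some vertex leaves a planar graph. -/
def IsApex {V : Type} (G : SimpleGraph V) : Prop :=
  ∃ v : V, IsPlanar (G.induce {u | u ≠ v})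

/-- Minor minimal non-apex: not apex, but every proper minor is apex. -/
def IsMMNA {V : Type} (G : SimpleGraph V) : Prop :=
  ¬ IsApex G ∧
    ∀ (W : Type) (H : SimpleGraph W), IsMinor H G → ¬ IsMinor G H → IsApex H

/-- The degree of a vertex, as the cardinality of its neighbor set. -/
noncomputable def vdeg {V : Type} (G : SimpleGraph V) (v : V) : ℕ :=
  (G.neighborSet v).ncard

/-- Edge list of the icosahedral graph on 12 vertices. -/
def icList : List (Fin 12 × Fin 12) :=
  [(0,1),(0,2),(0,3),(0,4),(0,5),
   (1,2),(2,3),(3,4),(4,5),(5,1),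
   (11,6),(11,7),(11,8),(11,9),(11,10),
   (6,7),(7,8),(8,9),(9,10),(10,6),
   (1,6),(1,7),(2,7),(2,8),(3,8),(3,9),(4,9),(4,10),(5,10),(5,6)]

/-- The icosahedral graph `Ic`. -/
def Ic : SimpleGraph (Fin 12) := SimpleGraph.fromRel (fun a b => (a, b) ∈ icList)

/-- The join `K₁ ∗ Ic`: a cone over the icosahedral graph. -/
def ConeIc : SimpleGraph (Unit ⊕ Fin 12) :=
  SimpleGraph.fromRel (fun a b =>
    a = Sum.inl () ∨ b = Sum.inl () ∨ ∃ x y, a = Sum.inr x ∧ b = Sum.inr y ∧ Ic.Adj x y)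

variable {V W : Type}

lemma conn_of_subsingleton (G : SimpleGraph V) (s : Set V) (h1 : s.Nonempty)
    (h2 : s.Subsingleton) : (G.induce s).Connected := by
  haveI : Nonempty ↥s := ⟨⟨h1.choose, h1.choose_spec⟩⟩
  apply Connected.mk
  intro u v
  have : u = v := Subtype.ext (h2 u.2 v.2)
  subst this; exact Reachable.refl _

lemma minor_of_branchSets (G : SimpleGraph V) (S : Fin 5 → Set V)
    (hdis : ∀ i j, i ≠ j → ∀ v, v ∈ S i → v ∈ S j → False)
    (hconn : ∀ i, (G.induce (S i)).Connected)
    (hadj : ∀ i j, i ≠ j → ∃ a ∈ S i, ∃ b ∈ S j, G.Adj a b) :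
    IsMinor (completeGraph (Fin 5)) G := by
  classical
  have hset : ∀ i : Fin 5,
      {v | (if h : ∃ j, v ∈ S j then some h.choose else none) = some i} = S i := by
    intro i; ext v; simp only [Set.mem_setOf_eq]
    constructor
    · intro h
      by_cases hex : ∃ j, v ∈ S j
      · rw [dif_pos hex] at h
        have h2 := hex.choose_spec
        have : hex.choose = i := by injection h
        exact this ▸ h2
      · rw [dif_neg hex] at h; exact absurd h (by simp)
    · intro hv
      have hex : ∃ j, v ∈ S j := ⟨i, hv⟩
      rw [dif_pos hex]
      have : hex.choose = i := by
        by_contra hne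
        exact hdis _ _ hne v hex.choose_spec hv
      rw [this]
  refine ⟨fun v => if h : ∃ j, v ∈ S j then some h.choose else none, ?_, ?_, ?_⟩
  · intro i
    obtain ⟨⟨v, hv⟩⟩ := (hconn i).nonempty
    refine ⟨v, ?_⟩
    have hm : v ∈ {v | (if h : ∃ j, v ∈ S j then some h.choose else none) = some i} := by
      rw [hset i]; exact hv
    exact hm
  · intro i; rw [hset i]; exact hconn i
  · intro i j hij
    have hij' : i ≠ j := by simpa using hij
    obtain ⟨a, ha, b, hb, hab⟩ := hadj i j hij'
    refine ⟨a, b, ?_, ?_, hab⟩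
    · have hm : a ∈ {v | (if h : ∃ j, v ∈ S j then some h.choose else none) = some i} := by
        rw [hset i]; exact ha
      exact hm
    · have hm : b ∈ {v | (if h : ∃ j, v ∈ S j then some h.choose else none) = some j} := by
        rw [hset j]; exact hb
      exact hm

lemma minor_of_clique (G : SimpleGraph V) (g : Fin 5 → V) (hinj : Function.Injective g)
    (hadj : ∀ i j, i ≠ j → G.Adj (g i) (g j)) : IsMinor (completeGraph (Fin 5)) G := by
  refine minor_of_branchSets G (fun i => {v | v = g i}) ?_ ?_ ?_
  · intro i j hij v hvi hvj
    exact hij (hinj ((hvi : v = g i) ▸ (hvj : v = g j)))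
  · intro i
    exact conn_of_subsingleton _ _ ⟨g i, rfl⟩ (fun x hx y hy => by
      rw [(hx : x = g i), (hy : y = g i)])
  · intro i j hij; exact ⟨g i, rfl, g j, rfl, hadj i j hij⟩

lemma isMinor_mono {F : SimpleGraph W} {G H : SimpleGraph V} (hle : G ≤ H) :
    IsMinor F G → IsMinor F H := by
  rintro ⟨f, h1, h2, h3⟩
  refine ⟨f, h1, fun w => (h2 w).mono ?_, fun w1 w2 hw => ?_⟩
  · intro a b hab
    exact hle hab
  · obtain ⟨v1, v2, e1, e2, hadj⟩ := h3 w1 w2 hw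
    exact ⟨v1, v2, e1, e2, hle hadj⟩

def induceInduceIso (G : SimpleGraph V) (s : Set V) (A : Set ↥s) :
    (G.induce s).induce A ≃g G.induce (Subtype.val '' A) where
  toFun u := ⟨u.1.1, ⟨u.1, u.2, rfl⟩⟩
  invFun v := ⟨⟨v.1, by obtain ⟨x, hx, he⟩ := v.2; exact he ▸ x.2⟩, by
      obtain ⟨x, hx, he⟩ := v.2
      have hxx : x = ⟨v.1, by obtain ⟨x', hx', he'⟩ := v.2; exact he' ▸ x'.2⟩ :=
        Subtype.ext he
      exact hxx ▸ hx⟩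
  left_inv u := by apply Subtype.ext; apply Subtype.ext; rfl
  right_inv v := by apply Subtype.ext; rfl
  map_rel_iff' := Iff.rfl

lemma isMinor_induce_lift {F : SimpleGraph W} {G : SimpleGraph V} (s : Set V) :
    IsMinor F (G.induce s) → IsMinor F G := by
  classical
  rintro ⟨f, h1, h2, h3⟩
  have hset : ∀ w, {v | (if h : v ∈ s then f ⟨v, h⟩ else none) = some w}
      = Subtype.val '' {x : ↥s | f x = some w} := by
    intro w; ext v
    simp only [Set.mem_setOf_eq, Set.mem_image]
    constructor
    · intro h
      by_cases hv : v ∈ s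
      · rw [dif_pos hv] at h; exact ⟨⟨v, hv⟩, h, rfl⟩
      · rw [dif_neg hv] at h; simp at h
    · rintro ⟨x, hx, rfl⟩
      rw [dif_pos x.2]; exact hx
  refine ⟨fun v => if h : v ∈ s then f ⟨v, h⟩ else none, ?_, ?_, ?_⟩
  · intro w; obtain ⟨x, hx⟩ := h1 w
    refine ⟨x.1, ?_⟩
    show (if h : x.1 ∈ s then f ⟨x.1, h⟩ else none) = some w
    rw [dif_pos x.2]; exact hx
  · intro w
    rw [hset w]
    exact ((induceInduceIso G s _).connected_iff).mp (h2 w)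
  · intro w1 w2 hw
    obtain ⟨v1, v2, e1, e2, hadj⟩ := h3 w1 w2 hw
    refine ⟨v1.1, v2.1, ?_, ?_, hadj⟩
    · show (if h : v1.1 ∈ s then f ⟨v1.1, h⟩ else none) = some w1
      rw [dif_pos v1.2]; exact e1
    · show (if h : v2.1 ∈ s then f ⟨v2.1, h⟩ else none) = some w2
      rw [dif_pos v2.2]; exact e2

def contractE (G : SimpleGraph V) (x y : V) : SimpleGraph {u : V // u ≠ y} :=
  SimpleGraph.fromRel (fun a b => G.Adj ↑a ↑b ∨ (↑a = x ∧ G.Adj y ↑b) ∨ (↑b = x ∧ G.Adj y ↑a))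

lemma contractE_minor {F : SimpleGraph W} {G : SimpleGraph V} {x y : V} (hxy : G.Adj x y) :
    IsMinor F (contractE G x y) → IsMinor F G := by
  classical
  have hx : x ≠ y := hxy.ne
  rintro ⟨f, h1, h2, h3⟩
  refine ⟨fun v => if h : v = y then f ⟨x, hx⟩ else f ⟨v, h⟩, ?_, ?_, ?_⟩
  · intro w; obtain ⟨a, ha⟩ := h1 w
    refine ⟨a.1, ?_⟩
    show (if h : a.1 = y then f ⟨x, hx⟩ else f ⟨a.1, h⟩) = some w
    rw [dif_neg a.2]; exact ha
  · intro w
    set T : Set V := {v | (if h : v = y then f ⟨x, hx⟩ else f ⟨v, h⟩) = some w} with hT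
    set S : Set {u : V // u ≠ y} := {a | f a = some w} with hS
    have memT : ∀ a : ↥S, (a.1.1 : V) ∈ T := by
      rintro ⟨⟨a, hay⟩, haS⟩
      show (if h : a = y then f ⟨x, hx⟩ else f ⟨a, h⟩) = some w
      rw [dif_neg hay]; exact haS
    have hSc := h2 w
    haveI : Nonempty ↥T := by
      obtain ⟨a⟩ := hSc.nonempty
      exact ⟨⟨a.1.1, memT a⟩⟩
    apply Connected.mk
    have one : ∀ (a b : ↥S), (G.Adj a.1.1 b.1.1 ∨ (a.1.1 = x ∧ G.Adj y b.1.1)) →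
        (G.induce T).Reachable ⟨a.1.1, memT a⟩ ⟨b.1.1, memT b⟩ := by
      intro a b h
      rcases h with h | ⟨hax, hyb⟩
      · exact Adj.reachable (by exact h)
      · have hfx : f ⟨x, hx⟩ = some w := by
          have he : (a.1 : {u : V // u ≠ y}) = ⟨x, hx⟩ := Subtype.ext hax
          rw [← he]; exact a.2
        have hyT : y ∈ T := by
          show (if h : y = y then f ⟨x, hx⟩ else f ⟨y, h⟩) = some w
          rw [dif_pos rfl]; exact hfx
        refine (Adj.reachable (v := (⟨y, hyT⟩ : ↥T)) ?_).trans (Adj.reachable ?_)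
        · show G.Adj a.1.1 y
          rw [hax]; exact hxy
        · show G.Adj y b.1.1
          exact hyb
    have step : ∀ (a b : ↥S), (contractE G x y).Adj a.1 b.1 →
        (G.induce T).Reachable ⟨a.1.1, memT a⟩ ⟨b.1.1, memT b⟩ := by
      intro a b hab
      rw [contractE, fromRel_adj] at hab
      obtain ⟨hne, hr⟩ := hab
      rcases hr with (h | ⟨h1', h2'⟩ | ⟨h1', h2'⟩) | (h | ⟨h1', h2'⟩ | ⟨h1', h2'⟩)
      · exact one a b (Or.inl h)
      · exact one a b (Or.inr ⟨h1', h2'⟩)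
      · exact (one b a (Or.inr ⟨h1', h2'⟩)).symm
      · exact (one b a (Or.inl h)).symm
      · exact (one b a (Or.inr ⟨h1', h2'⟩)).symm
      · exact one a b (Or.inr ⟨h1', h2'⟩)
    have main : ∀ (a b : ↥S) (p : ((contractE G x y).induce S).Walk a b),
        (G.induce T).Reachable ⟨a.1.1, memT a⟩ ⟨b.1.1, memT b⟩ := by
      intro a b p
      induction p with
      | nil => exact Reachable.refl _
      | cons h p ih => exact (step _ _ (by exact h)).trans ih
    have repr : ∀ u : ↥T, ∃ a : ↥S, (G.induce T).Reachable u ⟨a.1.1, memT a⟩ := by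
      rintro ⟨u, hu⟩
      by_cases h : u = y
      · have hfx : f ⟨x, hx⟩ = some w := by
          have h2u : (if h' : u = y then f ⟨x, hx⟩ else f ⟨u, h'⟩) = some w := hu
          rwa [dif_pos h] at h2u
        refine ⟨⟨⟨x, hx⟩, hfx⟩, Adj.reachable ?_⟩
        show G.Adj u x
        rw [h]; exact hxy.symm
      · have hfu : f ⟨u, h⟩ = some w := by
          have : (if h : u = y then f ⟨x, hx⟩ else f ⟨u, h⟩) = some w := hu
          rwa [dif_neg h] at this
        exact ⟨⟨⟨u, h⟩, hfu⟩, Reachable.refl _⟩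
    intro u v
    obtain ⟨a, ra⟩ := repr u
    obtain ⟨b, rb⟩ := repr v
    exact ra.trans (((hSc.preconnected a b).elim fun p => main a b p).trans rb.symm)
  · intro w1 w2 hw
    obtain ⟨a, b, e1, e2, hadj⟩ := h3 w1 w2 hw
    rw [contractE, fromRel_adj] at hadj
    obtain ⟨hne, hr⟩ := hadj
    have hay : (a : V) ≠ y := a.2
    have hby : (b : V) ≠ y := b.2
    have da : (if h : (a:V) = y then f ⟨x, hx⟩ else f ⟨(a:V), h⟩) = some w1 := by
      rw [dif_neg hay]; exact e1
    have db : (if h : (b:V) = y then f ⟨x, hx⟩ else f ⟨(b:V), h⟩) = some w2 := by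
      rw [dif_neg hby]; exact e2
    have dy1 : (a:V) = x → (if h : y = y then f ⟨x, hx⟩ else f ⟨y, h⟩) = some w1 := by
      intro hax
      rw [dif_pos rfl, show (⟨x, hx⟩ : {u : V // u ≠ y}) = a from Subtype.ext hax.symm]
      exact e1
    have dy2 : (b:V) = x → (if h : y = y then f ⟨x, hx⟩ else f ⟨y, h⟩) = some w2 := by
      intro hbx
      rw [dif_pos rfl, show (⟨x, hx⟩ : {u : V // u ≠ y}) = b from Subtype.ext hbx.symm]
      exact e2
    rcases hr with (h | ⟨h1', h2'⟩ | ⟨h1', h2'⟩) | (h | ⟨h1', h2'⟩ | ⟨h1', h2'⟩)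
    · exact ⟨a, b, da, db, h⟩
    · exact ⟨y, b, dy1 h1', db, h2'⟩
    · exact ⟨a, y, da, dy2 h1', h2'.symm⟩
    · exact ⟨a, b, da, db, h.symm⟩
    · exact ⟨a, y, da, dy2 h1', h2'.symm⟩
    · exact ⟨y, b, dy1 h1', db, h2'⟩

lemma ncard_eq_fintypeCard (s : Set V) [Fintype ↥s] : s.ncard = Fintype.card ↥s := by
  rw [Set.ncard_eq_toFinset_card', Set.toFinset_card]

lemma edgeSet_ncard_le_of_inj [Finite W] (G : SimpleGraph V) (G' : SimpleGraph W)
    (g : V → W) (s : Set (Sym2 V)) (hs : s ⊆ G.edgeSet)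
    (hadj : ∀ a b, G.Adj a b → s(a, b) ∈ s → G'.Adj (g a) (g b))
    (hinj : ∀ a b c d, s(a,b) ∈ s → s(c,d) ∈ s → G.Adj a b → G.Adj c d →
        s(g a, g b) = s(g c, g d) → s(a,b) = s(c,d)) :
    s.ncard ≤ G'.edgeSet.ncard := by
  refine Set.ncard_le_ncard_of_injOn (Sym2.map g) ?_ ?_ (Set.toFinite _)
  · intro e he
    revert he
    induction e using Sym2.ind with
    | _ a b =>
      intro he
      rw [Sym2.map_pair_eq, mem_edgeSet]
      exact hadj a b (G.mem_edgeSet.mp (hs he)) he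
  · intro e1 he1 e2 he2 heq
    revert he1 he2 heq
    induction e1 using Sym2.ind with
    | _ a b =>
      induction e2 using Sym2.ind with
      | _ c d =>
        intro he1 he2 heq
        rw [Sym2.map_pair_eq, Sym2.map_pair_eq] at heq
        exact hinj a b c d he1 he2 (G.mem_edgeSet.mp (hs he1)) (G.mem_edgeSet.mp (hs he2)) heq

lemma card_edge_del [Fintype V] (G : SimpleGraph V) (v z : V) (hz : z ≠ v) :
    G.edgeSet.ncard ≤ (G.induce {u | u ≠ v}).edgeSet.ncard + (G.neighborSet v).ncard := by
  classical
  have h1 : G.edgeSet.ncard ≤ (G.edgeSet \ G.incidenceSet v).ncard + (G.incidenceSet v).ncard :=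
    Set.ncard_le_ncard_diff_add_ncard _ _ (Set.toFinite _)
  have h2 : (G.incidenceSet v).ncard = (G.neighborSet v).ncard := by
    rw [ncard_eq_fintypeCard, ncard_eq_fintypeCard, G.card_incidenceSet_eq_degree,
      G.card_neighborSet_eq_degree]
  have key : ∀ a b, G.Adj a b → s(a,b) ∈ G.edgeSet \ G.incidenceSet v → a ≠ v ∧ b ≠ v := by
    intro a b hab ⟨_, hni⟩
    constructor
    · rintro rfl; exact hni ⟨G.mem_edgeSet.mpr hab, Sym2.mem_mk_left _ _⟩
    · rintro rfl; exact hni ⟨G.mem_edgeSet.mpr hab, Sym2.mem_mk_right _ _⟩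
  have h3 : (G.edgeSet \ G.incidenceSet v).ncard ≤ (G.induce {u | u ≠ v}).edgeSet.ncard := by
    set g : V → ↥{u | u ≠ v} := fun u => if h : u ≠ v then (⟨u, h⟩ : ↥{u | u ≠ v}) else ⟨z, hz⟩
      with hgdef
    have gof : ∀ u, g u = if h : u ≠ v then (⟨u, h⟩ : ↥{u | u ≠ v}) else ⟨z, hz⟩ := fun u => rfl
    refine edgeSet_ncard_le_of_inj G _ g _ Set.diff_subset ?_ ?_
    · intro a b hab hm
      obtain ⟨ha, hb⟩ := key a b hab hm
      rw [gof, gof, dif_pos ha, dif_pos hb]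
      exact hab
    · intro a b c d h1' h2' hab hcd heq
      obtain ⟨ha, hb⟩ := key a b hab h1'
      obtain ⟨hc, hd⟩ := key c d hcd h2'
      rw [gof, gof, gof, gof, dif_pos ha, dif_pos hb, dif_pos hc, dif_pos hd] at heq
      rcases Sym2.eq_iff.mp heq with ⟨u1, u2⟩ | ⟨u1, u2⟩
      · rw [Subtype.mk.injEq] at u1 u2; rw [u1, u2]
      · rw [Subtype.mk.injEq] at u1 u2; rw [u1, u2, Sym2.eq_swap]
  omega

lemma card_edge_contract [Fintype V] (G : SimpleGraph V) {x y : V} (hxy : G.Adj x y) :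
    G.edgeSet.ncard ≤ (contractE G x y).edgeSet.ncard
      + ((G.neighborSet x ∩ G.neighborSet y).ncard + 1) := by
  classical
  have hx : x ≠ y := hxy.ne
  set B : Set (Sym2 V) := insert s(x, y) ((fun c => s(y, c)) '' (G.neighborSet x ∩ G.neighborSet y)) with hB
  have mem2 : ∀ c, G.Adj x c → G.Adj y c → s(y, c) ∈ B := by
    intro c h1 h2
    exact Set.mem_insert_of_mem _ ⟨c, ⟨h1, h2⟩, rfl⟩
  have hBcard : B.ncard ≤ (G.neighborSet x ∩ G.neighborSet y).ncard + 1 := by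
    calc B.ncard ≤ ((fun c => s(y, c)) '' (G.neighborSet x ∩ G.neighborSet y)).ncard + 1 :=
          Set.ncard_insert_le _ _
    _ ≤ (G.neighborSet x ∩ G.neighborSet y).ncard + 1 := by
          have := Set.ncard_image_le (s := G.neighborSet x ∩ G.neighborSet y)
            (f := fun c => s(y, c)) (Set.toFinite _)
          omega
  have h1 : G.edgeSet.ncard ≤ (G.edgeSet \ B).ncard + B.ncard :=
    Set.ncard_le_ncard_diff_add_ncard _ _ (Set.toFinite _)
  set g : V → {u : V // u ≠ y} := fun u => if h : u = y then ⟨x, hx⟩ else ⟨u, h⟩ with hg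
  have gof : ∀ u, g u = if h : u = y then (⟨x, hx⟩ : {u : V // u ≠ y}) else ⟨u, h⟩ := fun u => rfl
  have gkey : ∀ u u', g u = g u' → u = u' ∨ (u = y ∧ u' = x) ∨ (u = x ∧ u' = y) := by
    intro u u' h
    rw [gof, gof] at h
    by_cases h1' : u = y <;> by_cases h2' : u' = y
    · left; rw [h1', h2']
    · rw [dif_pos h1', dif_neg h2'] at h
      rw [Subtype.mk.injEq] at h
      right; left; exact ⟨h1', h.symm⟩
    · rw [dif_neg h1', dif_pos h2'] at h
      rw [Subtype.mk.injEq] at h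
      right; right; exact ⟨h, h2'⟩
    · rw [dif_neg h1', dif_neg h2'] at h
      rw [Subtype.mk.injEq] at h
      left; exact h
  have h2 : (G.edgeSet \ B).ncard ≤ (contractE G x y).edgeSet.ncard := by
    refine edgeSet_ncard_le_of_inj G _ g _ Set.diff_subset ?_ ?_
    · intro a b hab hm
      obtain ⟨_, hnB⟩ := hm
      rw [contractE, fromRel_adj]
      by_cases ha : a = y <;> by_cases hb : b = y
      · exact absurd (ha.trans hb.symm) hab.ne
      · have hbx : b ≠ x := by
          rintro rfl
          exact hnB (by rw [ha, Sym2.eq_swap]; exact Set.mem_insert _ _)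
        rw [gof, gof, dif_pos ha, dif_neg hb]
        refine ⟨fun hcon => hbx (congrArg Subtype.val hcon).symm, ?_⟩
        left; right; left
        exact ⟨rfl, ha ▸ hab⟩
      · have hax : a ≠ x := by
          rintro rfl
          exact hnB (by rw [hb]; exact Set.mem_insert _ _)
        rw [gof, gof, dif_neg ha, dif_pos hb]
        refine ⟨fun hcon => hax (congrArg Subtype.val hcon), ?_⟩
        left; right; right
        exact ⟨rfl, hb ▸ hab.symm⟩
      · rw [gof, gof, dif_neg ha, dif_neg hb]
        exact ⟨fun hcon => hab.ne (congrArg Subtype.val hcon), Or.inl (Or.inl hab)⟩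
    · have key : ∀ a b c d, s(a,b) ∈ G.edgeSet \ B → s(c,d) ∈ G.edgeSet \ B →
          G.Adj a b → G.Adj c d → g a = g c → g b = g d → s(a,b) = s(c,d) := by
        intro a b c d hm1 hm2 hab hcd gac gbd
        rcases gkey _ _ gac with rfl | ⟨rfl, rfl⟩ | ⟨rfl, rfl⟩
        · rcases gkey _ _ gbd with rfl | ⟨rfl, rfl⟩ | ⟨rfl, rfl⟩
          · rfl
          · exact absurd (by rw [Sym2.eq_swap]; exact mem2 a hcd.symm hab.symm) hm1.2
          · exact absurd (by rw [Sym2.eq_swap]; exact mem2 a hab.symm hcd.symm) hm2.2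
        · rcases gkey _ _ gbd with rfl | ⟨rfl, rfl⟩ | ⟨rfl, rfl⟩
          · exact absurd (mem2 b hcd hab) hm1.2
          · exact absurd hab.ne (by simp)
          · exact absurd (Set.mem_insert _ _) (by rw [Sym2.eq_swap] at hm1; exact hm1.2)
        · rcases gkey _ _ gbd with rfl | ⟨rfl, rfl⟩ | ⟨rfl, rfl⟩
          · exact absurd (mem2 b hab hcd) hm2.2
          · exact absurd (Set.mem_insert _ _) (by rw [Sym2.eq_swap] at hm2; exact hm2.2)
          · exact absurd hcd.ne (by simp)
      intro a b c d hm1 hm2 hab hcd heq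
      rcases Sym2.eq_iff.mp heq with ⟨u1, u2⟩ | ⟨u1, u2⟩
      · exact key a b c d hm1 hm2 hab hcd u1 u2
      · have hm2' : s(d,c) ∈ G.edgeSet \ B := by rwa [Sym2.eq_swap]
        exact (key a b d c hm1 hm2' hab hcd.symm u1 u2).trans Sym2.eq_swap
  omega

lemma edge_ncard_le_choose [Fintype V] (G : SimpleGraph V) :
    G.edgeSet.ncard ≤ (Fintype.card V).choose 2 := by
  classical
  rw [Set.ncard_eq_toFinset_card']
  exact card_edgeFinset_le_card_choose_two

lemma exists_subgraph_exact [Fintype V] (G : SimpleGraph V) (m : ℕ)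
    (hm : m ≤ G.edgeSet.ncard) : ∃ H : SimpleGraph V, H ≤ G ∧ H.edgeSet.ncard = m := by
  classical
  rw [Set.ncard_eq_toFinset_card'] at hm
  obtain ⟨t, ht, htc⟩ := Finset.exists_subset_card_eq hm
  refine ⟨SimpleGraph.fromEdgeSet ↑t, ?_, ?_⟩
  · intro a b hab
    rw [fromEdgeSet_adj] at hab
    have := ht hab.1
    rw [Set.mem_toFinset] at this
    exact G.mem_edgeSet.mp this
  · have hsub : (↑t : Set (Sym2 V)) ⊆ G.edgeSet := by
      intro e he; have := ht he; rwa [Set.mem_toFinset] at this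
    rw [edgeSet_fromEdgeSet]
    have hde : (↑t : Set (Sym2 V)) \ {e | e.IsDiag} = ↑t := by
      ext e
      constructor
      · exact fun h => h.1
      · intro h
        exact ⟨h, fun hd => G.not_isDiag_of_mem_edgeSet (hsub h) hd⟩
    rw [show Sym2.diagSet = {e : Sym2 V | e.IsDiag} from rfl, hde, Set.ncard_coe_finset, htc]

lemma nonadj_bound {V : Type} [Fintype V] (G : SimpleGraph V) (v u z : V)
    (hd : (G.neighborSet v).ncard ≤ 4)
    (htri : 3 ≤ (G.neighborSet v ∩ G.neighborSet u).ncard)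
    (hu : G.Adj v u) (hz : G.Adj v z) (hzu : z ≠ u) : G.Adj u z := by
  by_contra hnz
  set C := G.neighborSet v ∩ G.neighborSet u with hC
  have hzC : z ∉ C := fun h => hnz h.2
  have hsub : insert z C ⊆ G.neighborSet v \ {u} := by
    rintro t (rfl | ⟨h1, h2⟩)
    · exact ⟨hz, hzu⟩
    · exact ⟨h1, fun he => G.irrefl (he ▸ h2)⟩
  have hcard1 : (insert z C).ncard = C.ncard + 1 :=
    Set.ncard_insert_of_notMem hzC (Set.toFinite _)
  have hcard2 : (G.neighborSet v \ {u}).ncard = (G.neighborSet v).ncard - 1 :=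
    Set.ncard_diff_singleton_of_mem hu
  have hle := Set.ncard_le_ncard hsub (Set.toFinite _)
  have hu1 : 1 ≤ (G.neighborSet v).ncard := by
    have : ({u} : Set V).ncard ≤ (G.neighborSet v).ncard :=
      Set.ncard_le_ncard (by simpa using hu) (Set.toFinite _)
    simpa using this
  omega

lemma nonadj_unique {V : Type} [Fintype V] (G : SimpleGraph V) (v u z w : V)
    (hd : (G.neighborSet v).ncard ≤ 5)
    (htri : 3 ≤ (G.neighborSet v ∩ G.neighborSet u).ncard)
    (hu : G.Adj v u) (hz : G.Adj v z) (hw : G.Adj v w)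
    (hzu : z ≠ u) (hwu : w ≠ u) (hnz : ¬ G.Adj u z) (hnw : ¬ G.Adj u w) : z = w := by
  by_contra hzw
  set C := G.neighborSet v ∩ G.neighborSet u with hC
  have hzC : z ∉ C := fun h => hnz h.2
  have hwC : w ∉ C := fun h => hnw h.2
  have hsub : insert z (insert w C) ⊆ G.neighborSet v \ {u} := by
    rintro t (rfl | rfl | ⟨h1, h2⟩)
    · exact ⟨hz, hzu⟩
    · exact ⟨hw, hwu⟩
    · exact ⟨h1, fun he => G.irrefl (he ▸ h2)⟩
  have hcard0 : (insert w C).ncard = C.ncard + 1 :=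
    Set.ncard_insert_of_notMem hwC (Set.toFinite _)
  have hcard1 : (insert z (insert w C)).ncard = (insert w C).ncard + 1 := by
    refine Set.ncard_insert_of_notMem ?_ (Set.toFinite _)
    rintro (rfl | h)
    · exact hzw rfl
    · exact hzC h
  have hcard2 : (G.neighborSet v \ {u}).ncard = (G.neighborSet v).ncard - 1 :=
    Set.ncard_diff_singleton_of_mem hu
  have hle := Set.ncard_le_ncard hsub (Set.toFinite _)
  have hu1 : 1 ≤ (G.neighborSet v).ncard := by
    have : ({u} : Set V).ncard ≤ (G.neighborSet v).ncard :=
      Set.ncard_le_ncard (by simpa using hu) (Set.toFinite _)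
    simpa using this
  omega

lemma minor_of_5 {V : Type} (G : SimpleGraph V) (v a b c d : V)
    (hva : G.Adj v a) (hvb : G.Adj v b) (hvc : G.Adj v c) (hvd : G.Adj v d)
    (hab : G.Adj a b) (hac : G.Adj a c) (had : G.Adj a d)
    (hbc : G.Adj b c) (hbd : G.Adj b d) (hcd : G.Adj c d) :
    IsMinor (completeGraph (Fin 5)) G := by
  apply minor_of_clique G ![v, a, b, c, d]
  · have h01 := hva.ne
    have h02 := hvb.ne
    have h03 := hvc.ne
    have h04 := hvd.ne
    have h12 := hab.ne
    have h13 := hac.ne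
    have h14 := had.ne
    have h23 := hbc.ne
    have h24 := hbd.ne
    have h34 := hcd.ne
    intro i j hij
    fin_cases i <;> fin_cases j <;> simp_all
  · intro i j hij
    fin_cases i <;> fin_cases j <;> simp_all [G.adj_comm]

lemma minor_of_pair {V : Type} (G : SimpleGraph V) (v a c e b d : V)
    (hva : G.Adj v a) (hvc : G.Adj v c) (hve : G.Adj v e) (hvb : G.Adj v b)
    (hac : G.Adj a c) (hae : G.Adj a e) (had : G.Adj a d)
    (hce : G.Adj c e) (hcb : G.Adj c b)
    (heb : G.Adj e b) (hbd : G.Adj b d)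
    (hvd : v ≠ d) (hab : a ≠ b) (hcd : c ≠ d) (hed : e ≠ d) :
    IsMinor (completeGraph (Fin 5)) G := by
  apply minor_of_branchSets G ![{v}, {a}, {c}, {e}, {b, d}]
  · have h01 := hva.ne
    have h02 := hvc.ne
    have h03 := hve.ne
    have h04 := hvb.ne
    have h12 := hac.ne
    have h13 := hae.ne
    have h14 := had.ne
    have h23 := hce.ne
    have h24 := hcb.ne
    have h34 := heb.ne
    have hbd' := hbd.ne
    intro i j hij t hti htj
    fin_cases i <;> fin_cases j <;>
      simp_all (config := {decide := false}) [Set.mem_singleton_iff, Set.mem_insert_iff]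
  · intro i
    fin_cases i <;>
      first
        | exact conn_of_subsingleton _ _ ⟨_, rfl⟩ (fun x hx y hy => by
            rw [(hx : x = _), (hy : y = _)])
        | exact G.induce_pair_connected_of_adj hbd
  · intro i j hij
    fin_cases i <;> fin_cases j <;> try exact absurd rfl hij
    · exact ⟨v, rfl, a, rfl, hva⟩
    · exact ⟨v, rfl, c, rfl, hvc⟩
    · exact ⟨v, rfl, e, rfl, hve⟩
    · exact ⟨v, rfl, b, Or.inl rfl, hvb⟩
    · exact ⟨a, rfl, v, rfl, hva.symm⟩
    · exact ⟨a, rfl, c, rfl, hac⟩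
    · exact ⟨a, rfl, e, rfl, hae⟩
    · exact ⟨a, rfl, d, Or.inr rfl, had⟩
    · exact ⟨c, rfl, v, rfl, hvc.symm⟩
    · exact ⟨c, rfl, a, rfl, hac.symm⟩
    · exact ⟨c, rfl, e, rfl, hce⟩
    · exact ⟨c, rfl, b, Or.inl rfl, hcb⟩
    · exact ⟨e, rfl, v, rfl, hve.symm⟩
    · exact ⟨e, rfl, a, rfl, hae.symm⟩
    · exact ⟨e, rfl, c, rfl, hce.symm⟩
    · exact ⟨e, rfl, b, Or.inl rfl, heb⟩
    · exact ⟨b, Or.inl rfl, v, rfl, hvb.symm⟩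
    · exact ⟨d, Or.inr rfl, a, rfl, had.symm⟩
    · exact ⟨b, Or.inl rfl, c, rfl, hcb.symm⟩
    · exact ⟨b, Or.inl rfl, e, rfl, heb.symm⟩

lemma finset_four {V : Type} [DecidableEq V] {s : Finset V} (h : s.card = 4) :
    ∃ a b c d : V, a ≠ b ∧ a ≠ c ∧ a ≠ d ∧ b ≠ c ∧ b ≠ d ∧ c ≠ d ∧ s = {a, b, c, d} := by
  obtain ⟨a, t, hat, rfl, ht⟩ := Finset.card_eq_succ.mp h
  obtain ⟨b, c, d, hbc, hbd, hcd, rfl⟩ := Finset.card_eq_three.mp ht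
  exact ⟨a, b, c, d, fun h' => hat (by rw [h']; simp), fun h' => hat (by rw [h']; simp),
    fun h' => hat (by rw [h']; simp), hbc, hbd, hcd, rfl⟩

lemma mader : ∀ n : ℕ, ∀ (V : Type) [Fintype V], ∀ G : SimpleGraph V,
    Fintype.card V = n → 5 ≤ n → 3 * n - 5 ≤ G.edgeSet.ncard →
    IsMinor (completeGraph (Fin 5)) G := by
  intro n
  induction n using Nat.strong_induction_on with
  | _ n ih =>
    intro V _ G hcard h5 he
    classical
    obtain ⟨H, hHG, hHe⟩ := exists_subgraph_exact G (3 * n - 5) he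
    refine isMinor_mono hHG ?_
    by_cases hdeg : ∃ v : V, (H.neighborSet v).ncard ≤ 3
    · -- delete a low degree vertex
      obtain ⟨v, hv⟩ := hdeg
      obtain ⟨z, hz⟩ := Fintype.exists_ne_of_one_lt_card (by omega) v
      have hdel := card_edge_del H v z hz
      have hcard' : Fintype.card ↥{u | u ≠ v} = n - 1 := by
        have h1 : Fintype.card {u : V // ¬ u = v}
            = Fintype.card V - Fintype.card {u : V // u = v} :=
          Fintype.card_subtype_compl _
        rw [Fintype.card_subtype_eq, hcard] at h1
        rw [← h1]
        exact Fintype.card_congr (Equiv.refl _)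
      by_cases h6 : 6 ≤ n
      · exact isMinor_induce_lift _
          (ih (n-1) (by omega) (↥{u | u ≠ v}) (H.induce {u | u ≠ v}) hcard' (by omega) (by omega))
      · exfalso
        have hb := edge_ncard_le_choose (H.induce {u | u ≠ v})
        rw [hcard'] at hb
        have hn5 : n = 5 := by omega
        have hch : (5 - 1).choose 2 = 6 := by decide
        subst hn5
        rw [hch] at hb
        omega
    · by_cases hcon : ∃ x y : V, H.Adj x y ∧ (H.neighborSet x ∩ H.neighborSet y).ncard ≤ 2
      · -- contract an edge with few common neighbors
        obtain ⟨x, y, hxy, hc⟩ := hcon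
        have hcontr := card_edge_contract H hxy
        have hcard' : Fintype.card {u : V // u ≠ y} = n - 1 := by
          have h1 : Fintype.card {u : V // ¬ u = y}
              = Fintype.card V - Fintype.card {u : V // u = y} :=
            Fintype.card_subtype_compl _
          rw [Fintype.card_subtype_eq, hcard] at h1
          exact h1
        by_cases h6 : 6 ≤ n
        · exact contractE_minor hxy
            (ih (n-1) (by omega) ({u : V // u ≠ y}) (contractE H x y) hcard' (by omega) (by omega))
        · exfalso
          have hb := edge_ncard_le_choose (contractE H x y)
          rw [hcard'] at hb
          have hn5 : n = 5 := by omega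
          have hch : (5 - 1).choose 2 = 6 := by decide
          subst hn5
          rw [hch] at hb
          omega
      · -- minimum degree 4 or 5, every edge in ≥ 3 triangles
        push_neg at hdeg hcon
        haveI hnV : Nonempty V := by
          rw [← Fintype.card_pos_iff]; omega
        have htri : ∀ x y : V, H.Adj x y →
            3 ≤ (H.neighborSet x ∩ H.neighborSet y).ncard := by
          intro x y h
          have := hcon x y h
          omega
        have hdeg_eq : ∀ u : V, H.degree u = (H.neighborSet u).ncard := by
          intro u; rw [ncard_eq_fintypeCard (H.neighborSet u), H.card_neighborSet_eq_degree]
        obtain ⟨v, hv5⟩ : ∃ v : V, (H.neighborSet v).ncard ≤ 5 := by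
          by_contra hcx
          push_neg at hcx
          have hsum := H.sum_degrees_eq_twice_card_edges
          have h6n : (Finset.univ : Finset V).card • 6 ≤ ∑ u : V, H.degree u := by
            refine Finset.card_nsmul_le_sum Finset.univ (fun u => H.degree u) 6 ?_
            intro u _
            have := hcx u
            show 6 ≤ H.degree u
            rw [hdeg_eq u]
            omega
          rw [Finset.card_univ, hcard, smul_eq_mul] at h6n
          have hef : H.edgeFinset.card = 3 * n - 5 := by
            rw [← hHe]; exact (Set.ncard_eq_toFinset_card' _).symm
          omega
        have hv4 : 4 ≤ (H.neighborSet v).ncard := by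
          have := hdeg v; omega
        set Sf : Finset V := H.neighborFinset v with hSf
        have hSfcard : Sf.card = (H.neighborSet v).ncard :=
          (Set.ncard_eq_toFinset_card' _).symm
        have hmemAdj : ∀ u, u ∈ Sf → H.Adj v u := fun u hu =>
          (H.mem_neighborFinset v u).mp hu
        -- key uniqueness of non-neighbors within the neighborhood
        have uniq : ∀ u ∈ Sf, ∀ z ∈ Sf, ∀ w ∈ Sf, z ≠ u → w ≠ u →
            ¬ H.Adj u z → ¬ H.Adj u w → z = w := by
          intro u hu z hzm w hwm hzu hwu hnz hnw
          exact nonadj_unique H v u z w hv5 (htri v u (hmemAdj u hu))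
            (hmemAdj u hu) (hmemAdj z hzm) (hmemAdj w hwm) hzu hwu hnz hnw
        by_cases hd4 : (H.neighborSet v).ncard = 4
        · -- degree 4 : N(v) ∪ {v} is a K5
          have hclq : ∀ p ∈ Sf, ∀ q ∈ Sf, p ≠ q → H.Adj p q := by
            intro p hp q hq hpq
            exact nonadj_bound H v p q (le_of_eq hd4) (htri v p (hmemAdj p hp))
              (hmemAdj p hp) (hmemAdj q hq) (fun h => hpq h.symm)
          obtain ⟨a, b, c, d, nab, nac, nad, nbc, nbd, ncd, hlist⟩ :=
            finset_four (by rw [hSfcard, hd4] : Sf.card = 4)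
          have ma : a ∈ Sf := by rw [hlist]; simp
          have mb : b ∈ Sf := by rw [hlist]; simp
          have mc : c ∈ Sf := by rw [hlist]; simp
          have md : d ∈ Sf := by rw [hlist]; simp
          exact minor_of_5 H v a b c d (hmemAdj a ma) (hmemAdj b mb) (hmemAdj c mc)
            (hmemAdj d md) (hclq a ma b mb nab) (hclq a ma c mc nac) (hclq a ma d md nad)
            (hclq b mb c mc nbc) (hclq b mb d md nbd) (hclq c mc d md ncd)
        · -- degree 5
          have hd5 : (H.neighborSet v).ncard = 5 := by omega
          by_cases hclq : ∀ p ∈ Sf, ∀ q ∈ Sf, p ≠ q → H.Adj p q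
          · obtain ⟨t, htS, htc⟩ := Finset.exists_subset_card_eq
              (by rw [hSfcard, hd5]; omega : 4 ≤ Sf.card)
            obtain ⟨a, b, c, d, nab, nac, nad, nbc, nbd, ncd, hlist⟩ := finset_four htc
            have ma : a ∈ Sf := htS (by rw [hlist]; simp)
            have mb : b ∈ Sf := htS (by rw [hlist]; simp)
            have mc : c ∈ Sf := htS (by rw [hlist]; simp)
            have md : d ∈ Sf := htS (by rw [hlist]; simp)
            exact minor_of_5 H v a b c d (hmemAdj a ma) (hmemAdj b mb) (hmemAdj c mc)
              (hmemAdj d md) (hclq a ma b mb nab) (hclq a ma c mc nac) (hclq a ma d md nad)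
              (hclq b mb c mc nbc) (hclq b mb d md nbd) (hclq c mc d md ncd)
          · push_neg at hclq
            obtain ⟨a, ma, b, mb, nab, hnab⟩ := hclq
            set T : Finset V := Sf \ {a, b} with hT
            have hTcard : T.card = 3 := by
              rw [hT, Finset.card_sdiff_of_subset (by
                intro t ht
                simp only [Finset.mem_insert, Finset.mem_singleton] at ht
                rcases ht with rfl | rfl
                · exact ma
                · exact mb)]
              rw [Finset.card_pair nab, hSfcard, hd5]
            have hTsub : ∀ p ∈ T, p ∈ Sf ∧ p ≠ a ∧ p ≠ b := by
              intro p hp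
              rw [hT, Finset.mem_sdiff, Finset.mem_insert, Finset.mem_singleton] at hp
              exact ⟨hp.1, fun h => hp.2 (Or.inl h), fun h => hp.2 (Or.inr h)⟩
            have hnba : ¬ H.Adj b a := fun h => hnab h.symm
            -- a is adjacent to everything in T
            have haT : ∀ p ∈ T, H.Adj a p := by
              intro p hp
              obtain ⟨hpS, hpa, hpb⟩ := hTsub p hp
              by_contra hna
              exact hpb (uniq a ma b mb p hpS (Ne.symm nab) hpa hnab hna).symm
            have hbT : ∀ p ∈ T, H.Adj b p := by
              intro p hp
              obtain ⟨hpS, hpa, hpb⟩ := hTsub p hp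
              by_contra hnb
              exact hpa (uniq b mb a ma p hpS nab hpb hnba hnb).symm
            by_cases hTclq : ∀ p ∈ T, ∀ q ∈ T, p ≠ q → H.Adj p q
            · obtain ⟨c, d, e, ncd, nce, nde, hlist⟩ := Finset.card_eq_three.mp hTcard
              have mc : c ∈ T := by rw [hlist]; simp
              have md : d ∈ T := by rw [hlist]; simp
              have me : e ∈ T := by rw [hlist]; simp
              exact minor_of_5 H v a c d e (hmemAdj a ma) (hmemAdj c (hTsub c mc).1)
                (hmemAdj d (hTsub d md).1) (hmemAdj e (hTsub e me).1)
                (haT c mc) (haT d md) (haT e me)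
                (hTclq c mc d md ncd) (hTclq c mc e me nce) (hTclq d md e me nde)
            · push_neg at hTclq
              obtain ⟨c, mc, d, md, ncd, hncd⟩ := hTclq
              have hTc2 : (T \ {c, d}).card = 1 := by
                rw [Finset.card_sdiff_of_subset (by
                  intro t ht
                  simp only [Finset.mem_insert, Finset.mem_singleton] at ht
                  rcases ht with rfl | rfl
                  · exact mc
                  · exact md), Finset.card_pair ncd, hTcard]
              obtain ⟨e, he⟩ := Finset.card_eq_one.mp hTc2
              have heT : e ∈ T ∧ e ∉ ({c, d} : Finset V) := by
                rw [← Finset.mem_sdiff, he]; simp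
              have me : e ∈ T := heT.1
              have nec : e ≠ c := by
                intro h; apply heT.2; rw [h]; simp
              have ned : e ≠ d := by
                intro h; apply heT.2; rw [h]; simp
              have hndc : ¬ H.Adj d c := fun h => hncd h.symm
              -- derived adjacencies
              have hce : H.Adj c e := by
                by_contra hn
                exact ned (uniq c (hTsub c mc).1 d (hTsub d md).1 e (hTsub e me).1
                  ncd.symm nec hncd hn).symm
              have hcb : H.Adj c b := by
                by_contra hn
                exact (hTsub d md).2.2 (uniq c (hTsub c mc).1 d (hTsub d md).1 b mb
                  ncd.symm (Ne.symm (hTsub c mc).2.2) hncd hn)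
              have heb : H.Adj e b := by
                by_contra hn
                have hnbe : ¬ H.Adj b e := fun h => hn h.symm
                exact (hTsub e me).2.1
                  (uniq b mb a ma e (hTsub e me).1 nab (hTsub e me).2.2 hnba hnbe).symm
              have hbd : H.Adj b d := by
                by_contra hn
                exact (hTsub d md).2.1
                  (uniq b mb a ma d (hTsub d md).1 nab (hTsub d md).2.2 hnba hn).symm
              exact minor_of_pair H v a c e b d
                (hmemAdj a ma) (hmemAdj c (hTsub c mc).1) (hmemAdj e (hTsub e me).1)
                (hmemAdj b mb)
                (haT c mc) (haT e me) (haT d md)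
                hce hcb heb hbd
                (hmemAdj d (hTsub d md).1).ne nab ncd ned

/-- Every apex graph on 12 vertices with exactly 38 edges has a vertex `v`
adjacent to all other vertices (degree 11) such that deleting `v` leaves a maximal planar
graph on 11 vertices, i.e. a planar graph with exactly `3·11 - 6 = 27` edges. -/
theorem stmt_17 (G : SimpleGraph (Fin 12)) (hapex : IsApex G)
    (hE : G.edgeSet.ncard = 38) :
    ∃ v, (∀ u, u ≠ v → G.Adj v u) ∧
      IsPlanar (G.induce {u | u ≠ v}) ∧
      (G.induce {u | u ≠ v}).edgeSet.ncard = 3 * 11 - 6 := by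
  classical
  obtain ⟨v, hplanar⟩ := hapex
  have hcards : Fintype.card ↥{u : Fin 12 | u ≠ v} = 11 := by
    have h1 : Fintype.card {u : Fin 12 // ¬ u = v}
        = Fintype.card (Fin 12) - Fintype.card {u : Fin 12 // u = v} :=
      Fintype.card_subtype_compl _
    rw [Fintype.card_subtype_eq, Fintype.card_fin] at h1
    exact h1
  have hub : (G.induce {u | u ≠ v}).edgeSet.ncard ≤ 27 := by
    by_contra hgt
    push_neg at hgt
    exact hplanar.1 (mader 11 _ _ hcards (by norm_num) (by omega))
  obtain ⟨z, hz⟩ := Fintype.exists_ne_of_one_lt_card (by simp) v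
  have hdel := card_edge_del G v z hz
  have hdeg : (G.neighborSet v).ncard ≤ 11 := by
    have h1 := G.degree_lt_card_verts v
    rw [Fintype.card_fin] at h1
    have h2 : G.degree v = (G.neighborSet v).ncard := by
      rw [ncard_eq_fintypeCard (G.neighborSet v), G.card_neighborSet_eq_degree]
    omega
  have hdeg11 : (G.neighborSet v).ncard = 11 := by omega
  have he27 : (G.induce {u | u ≠ v}).edgeSet.ncard = 27 := by omega
  refine ⟨v, ?_, hplanar, by omega⟩
  intro u hu
  have hnb : G.neighborFinset v = Finset.univ.erase v := by
    apply Finset.eq_of_subset_of_card_le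
    · intro w hw
      rw [mem_neighborFinset] at hw
      exact Finset.mem_erase.mpr ⟨hw.ne', Finset.mem_univ w⟩
    · rw [Finset.card_erase_of_mem (Finset.mem_univ v), Finset.card_univ, Fintype.card_fin]
      have h3 : (G.neighborFinset v).card = (G.neighborSet v).ncard :=
        (Set.ncard_eq_toFinset_card' _).symm
      omega
  have hmem : u ∈ G.neighborFinset v := by
    rw [hnb]
    exact Finset.mem_erase.mpr ⟨hu, Finset.mem_univ u⟩
  exact (mem_neighborFinset _ _ _).mp hmem
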